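/- For each i ∈ {1,...,n}, the i-th diagonal section σ_i : Σ^n → Σ × Σ^n, (u_1,...,u_n) ↦ (u_i, u_1,...,u_n), is a morphism of cone complexes from Π_n(Σ) to Π_n^+(Σ): it sends each cone of Π_n(Σ) into a single cone of Π_n^+(Σ), and its image is a union of cones of Π_n^+(Σ). -/
import Mathlib


/-!
STATEMENT 4: for each `i`, the diagonal section
`σ_i : Σ^n → Σ × Σ^n, (u_1,…,u_n) ↦ (u_i, u_1,…,u_n)` is a morphism of cone
complexes from `Π_n(Σ)` to `Π_n^+(Σ)`: it is linear and lattice-preserving,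
it sends each cone of `Π_n(Σ)` into a single cone of `Π_n^+(Σ)`, and its
image is a union of cones of `Π_n^+(Σ)`.
-/

open scoped BigOperators

/-- The coordinate cone of `ℝ_{≥0}^r` indexed by a set `S` of coordinates. -/
def coordCone {r : ℕ} (S : Set (Fin r)) : Set (Fin r → ℝ) :=
  {x | (∀ j, 0 ≤ x j) ∧ ∀ j, j ∉ S → x j = 0}

/-- `Σ`: a union of coordinate cones of `ℝ_{≥0}^r`. -/
def SigmaSet {r : ℕ} (F : Set (Set (Fin r))) : Set (Fin r → ℝ) :=
  ⋃ S ∈ F, coordCone S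

/-- Values `(0, (u_a^{(j)})_a)` of a tuple indexed by `ι`. -/
def valI {ι : Type} {r : ℕ} (u : ι → Fin r → ℝ) (j : Fin r) : Option ι → ℝ :=
  fun a => a.elim 0 fun i => u i j

/-- A combinatorial type for tuples indexed by `ι`. -/
def IsTypeFamilyI {ι : Type} {r : ℕ} (T : Fin r → Option ι → Option ι → Prop) : Prop :=
  ∀ j, (∀ a, T j a a) ∧ (∀ a b c, T j a b → T j b c → T j a c) ∧
    (∀ a b, T j a b ∨ T j b a) ∧ (∀ a, T j none a)

/-- The realization cone of a combinatorial type. -/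
def realConeI {ι : Type} {r : ℕ} (T : Fin r → Option ι → Option ι → Prop) :
    Set (ι → Fin r → ℝ) :=
  {u | (∀ i j, 0 ≤ u i j) ∧ ∀ j a b, T j a b → valI u j a ≤ valI u j b}

/-- The `i`-th diagonal section `σ_i : Σ^n → Σ × Σ^n`; an `(n+1)`-tuple is
indexed by `Option (Fin n)`, the first factor carrying label `0` (= `none`). -/
def diagSec {n r : ℕ} (i : Fin n) (u : Fin n → Fin r → ℝ) :
    Option (Fin n) → Fin r → ℝ :=
  fun a => a.elim (u i) u

/-- Relabeling map sending the extra label `some none` to `some i`. -/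
def flab {n : ℕ} (i : Fin n) : Option (Option (Fin n)) → Option (Fin n)
  | none => none
  | some none => some i
  | some (some k) => some k

lemma valI_diagSec {n r : ℕ} (i : Fin n) (u : Fin n → Fin r → ℝ) (j : Fin r)
    (a : Option (Option (Fin n))) :
    valI (diagSec i u) j a = valI u j (flab i a) := by
  rcases a with _ | (_ | k) <;> rfl

lemma valI_map_some {n r : ℕ} (w : Option (Fin n) → Fin r → ℝ) (j : Fin r)
    (a : Option (Fin n)) :
    valI (fun k => w (some k)) j a = valI w j (Option.map some a) := by
  rcases a with _ | k <;> rfl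

lemma flab_map_some {n : ℕ} (i : Fin n) (a : Option (Fin n)) :
    flab i (Option.map some a) = a := by rcases a with _ | k <;> rfl

lemma sigma_nonneg {r : ℕ} {F : Set (Set (Fin r))} {x : Fin r → ℝ}
    (hx : x ∈ SigmaSet F) : ∀ j, 0 ≤ x j := by
  rcases Set.mem_iUnion₂.1 hx with ⟨S, hS, h1, h2⟩
  exact h1

/-- The key lemma used twice in part 4: a point of the realization cone of the
pulled-back type of `u` has all coordinates in `Σ` and `w none = w (some i)`. -/
lemma key {n r : ℕ} {F : Set (Set (Fin r))} (i : Fin n) (u : Fin n → Fin r → ℝ)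
    (hu : ∀ k, u k ∈ SigmaSet F) (w : Option (Fin n) → Fin r → ℝ)
    (hw : w ∈ realConeI (fun j a b => valI u j (flab i a) ≤ valI u j (flab i b))) :
    (∀ k, w (some k) ∈ SigmaSet F) ∧ w none = w (some i) := by
  obtain ⟨hw0, hwle⟩ := hw
  constructor
  · intro k
    rcases Set.mem_iUnion₂.1 (hu k) with ⟨S, hS, hS1, hS2⟩
    refine Set.mem_iUnion₂.2 ⟨S, hS, fun j => hw0 (some k) j, fun j hj => ?_⟩
    have hz : u k j = 0 := hS2 j hj
    have hle : valI w j (some (some k)) ≤ valI w j none :=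
      hwle j (some (some k)) none (by show u k j ≤ (0 : ℝ); exact hz.le)
    exact le_antisymm hle (hw0 (some k) j)
  · funext j
    have h1 : valI w j (some none) ≤ valI w j (some (some i)) :=
      hwle j (some none) (some (some i)) (le_refl _)
    have h2 : valI w j (some (some i)) ≤ valI w j (some none) :=
      hwle j (some (some i)) (some none) (le_refl _)
    exact le_antisymm h1 h2

theorem stmt4 (n r : ℕ) (F : Set (Set (Fin r))) (i : Fin n) :
    -- σ_i restricts to a linear map on each cone
    (∀ (c : ℝ) (u w : Fin n → Fin r → ℝ),
        diagSec i (c • u + w) = c • diagSec i u + diagSec i w) ∧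
    -- σ_i is lattice-preserving
    (∀ u : Fin n → Fin r → ℝ, (∀ k j, ∃ z : ℤ, u k j = (z : ℝ)) →
        ∀ a j, ∃ z : ℤ, diagSec i u a j = (z : ℝ)) ∧
    -- σ_i sends each cone of Π_n(Σ) into a single cone of Π_n^+(Σ)
    (∀ T : Fin r → Option (Fin n) → Option (Fin n) → Prop,
        IsTypeFamilyI T → (∀ u ∈ realConeI T, ∀ k : Fin n, u k ∈ SigmaSet F) →
        ∃ T' : Fin r → Option (Option (Fin n)) → Option (Option (Fin n)) → Prop,
          IsTypeFamilyI T' ∧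
          (∀ w ∈ realConeI T', ∀ a : Option (Fin n), w a ∈ SigmaSet F) ∧
          diagSec i '' realConeI T ⊆ realConeI T') ∧
    -- the image of σ_i is a union of cones of Π_n^+(Σ)
    (∃ 𝒯 : Set (Fin r → Option (Option (Fin n)) → Option (Option (Fin n)) → Prop),
        (∀ T' ∈ 𝒯, IsTypeFamilyI T' ∧
          ∀ w ∈ realConeI T', ∀ a : Option (Fin n), w a ∈ SigmaSet F) ∧
        diagSec i '' {u | ∀ k : Fin n, u k ∈ SigmaSet F} =
          ⋃ T' ∈ 𝒯, realConeI T') := by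
  refine ⟨?_, ?_, ?_, ?_⟩
  · -- linearity
    intro c u w
    funext a j
    rcases a with _ | k <;> simp [diagSec]
  · -- lattice preserving
    intro u hu a j
    rcases a with _ | k
    · exact hu i j
    · exact hu k j
  · -- each cone mapped into a single cone
    intro T hT hcov
    refine ⟨fun j a b => T j (flab i a) (flab i b), ?_, ?_, ?_⟩
    · intro j
      obtain ⟨hr, htr, hto, hn⟩ := hT j
      exact ⟨fun a => hr _, fun a b c h1 h2 => htr _ _ _ h1 h2,
        fun a b => hto _ _, fun a => hn _⟩
    · intro w hw a
      obtain ⟨hw0, hwle⟩ := hw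
      have hu : (fun k => w (some k)) ∈ realConeI T := by
        refine ⟨fun k j => hw0 (some k) j, fun j a b hab => ?_⟩
        rw [valI_map_some, valI_map_some]
        exact hwle j _ _ (by show T j (flab i (Option.map some a)) (flab i (Option.map some b)); rw [flab_map_some, flab_map_some]; exact hab)
      have hk : ∀ k, w (some k) ∈ SigmaSet F := fun k => hcov _ hu k
      rcases a with _ | k
      · have h1 : ∀ j, valI w j (some none) ≤ valI w j (some (some i)) := fun j =>
          hwle j (some none) (some (some i)) ((hT j).1 (some i))
        have h2 : ∀ j, valI w j (some (some i)) ≤ valI w j (some none) := fun j =>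
          hwle j (some (some i)) (some none) ((hT j).1 (some i))
        have heq : w none = w (some i) := funext fun j => le_antisymm (h1 j) (h2 j)
        rw [heq]; exact hk i
      · exact hk k
    · rintro _ ⟨u, hu, rfl⟩
      obtain ⟨hu0, hule⟩ := hu
      refine ⟨fun a j => ?_, fun j a b hab => ?_⟩
      · rcases a with _ | k
        · exact hu0 i j
        · exact hu0 k j
      · rw [valI_diagSec, valI_diagSec]
        exact hule j _ _ hab
  · -- image is a union of cones
    refine ⟨{T' | ∃ u, (∀ k, u k ∈ SigmaSet F) ∧
        T' = fun j a b => valI u j (flab i a) ≤ valI u j (flab i b)}, ?_, ?_⟩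
    · rintro T' ⟨u, hu, rfl⟩
      have hu0 : ∀ k j, 0 ≤ u k j := fun k => sigma_nonneg (hu k)
      constructor
      · intro j
        have h0 : ∀ b : Option (Fin n), (0 : ℝ) ≤ valI u j b := by
          rintro (_ | k)
          · exact le_refl 0
          · exact hu0 k j
        exact ⟨fun a => le_refl _, fun a b c => le_trans, fun a b => le_total _ _,
          fun a => h0 (flab i a)⟩
      · intro w hw a
        obtain ⟨hk, heq⟩ := key i u hu w hw
        rcases a with _ | k
        · rw [heq]; exact hk i
        · exact hk k
    · ext w
      constructor
      · rintro ⟨u, hu, rfl⟩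
        refine Set.mem_iUnion₂.2
          ⟨fun j a b => valI u j (flab i a) ≤ valI u j (flab i b), ⟨u, hu, rfl⟩, ?_, ?_⟩
        · intro a j
          rcases a with _ | k
          · exact sigma_nonneg (hu i) j
          · exact sigma_nonneg (hu k) j
        · intro j a b hab
          rw [valI_diagSec, valI_diagSec]
          exact hab
      · intro hwmem
        rcases Set.mem_iUnion₂.1 hwmem with ⟨T', ⟨u, hu, rfl⟩, hw⟩
        obtain ⟨hk, heq⟩ := key i u hu w hw
        refine ⟨fun k => w (some k), fun k => hk k, ?_⟩
        funext a j
        rcases a with _ | k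
        · show w (some i) j = w none j
          rw [heq]
        · rfl
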